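/- (Averaged forward-backward splitting, weakly monotone case.) Let η ∈ ℝⁿ be a positive vector. Let F : ℝⁿ → ℝⁿ be continuously differentiable, Lipschitz with respect to ‖·‖_{∞,η⁻¹}, with μ_{∞,η⁻¹}(−DF(x)) ≤ 0 for all x ∈ ℝⁿ, and let d > 0 be a diagonal bound for F. Let G : ℝⁿ → ℝⁿ be continuously differentiable with μ_{∞,η⁻¹}(−DG(x)) ≤ 0 for all x ∈ ℝⁿ. Suppose there exists x with F(x) + G(x) = 0. Then for every α ∈ (0, 1/d), any sequence satisfying x_{k+1} = (1/2)x_k + (1/2)y_k with y_k + αG(y_k) = x_k − αF(x_k) for all k converges to some x* with F(x*) + G(x*) = 0. -/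

import Mathlib

open Filter

/-- Diagonally weighted ℓ∞ norm: ‖x‖_{∞,η⁻¹} = max_i |x_i|/η_i. -/
noncomputable def wNorm {n : ℕ} (η x : Fin n → ℝ) : ℝ := ⨆ i, |x i| / η i

/-- Diagonally weighted ℓ∞ logarithmic norm of a matrix. -/
noncomputable def logNorm {n : ℕ} (η : Fin n → ℝ) (A : Matrix (Fin n) (Fin n) ℝ) : ℝ :=
  ⨆ i, (A i i + ∑ j ∈ Finset.univ.erase i, (η j / η i) * |A i j|)

/-- Jacobian matrix of `F` at `x`: (DF(x))_{ij} = ∂F_i/∂x_j. -/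
noncomputable def jac {n : ℕ} (F : (Fin n → ℝ) → (Fin n → ℝ)) (x : Fin n → ℝ) :
    Matrix (Fin n) (Fin n) ℝ :=
  fun i j => fderiv ℝ F x (Pi.single j 1) i

set_option linter.unusedSectionVars false
set_option linter.unusedVariables false
set_option maxHeartbeats 1000000

namespace AuxFB

variable {n : ℕ} [Nonempty (Fin n)] {η : Fin n → ℝ}

lemma le_wNorm (x : Fin n → ℝ) (i : Fin n) : |x i| / η i ≤ wNorm η x :=
  le_ciSup (f := fun i => |x i| / η i) (Set.Finite.bddAbove (Set.finite_range _)) i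

lemma wNorm_le {x : Fin n → ℝ} {m : ℝ} (h : ∀ i, |x i| / η i ≤ m) : wNorm η x ≤ m :=
  ciSup_le h

lemma wNorm_nonneg (hη : ∀ i, 0 < η i) (x : Fin n → ℝ) : 0 ≤ wNorm η x := by
  obtain ⟨i⟩ := ‹Nonempty (Fin n)›
  exact le_trans (div_nonneg (abs_nonneg _) (hη i).le) (le_wNorm x i)

lemma abs_le_wNorm (hη : ∀ i, 0 < η i) (x : Fin n → ℝ) (i : Fin n) :
    |x i| ≤ η i * wNorm η x := by
  have := le_wNorm (η := η) x i
  rw [div_le_iff₀ (hη i)] at this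
  linarith [this]

lemma wNorm_add_le (hη : ∀ i, 0 < η i) (x y : Fin n → ℝ) :
    wNorm η (x + y) ≤ wNorm η x + wNorm η y := by
  apply wNorm_le
  intro i
  calc |(x + y) i| / η i ≤ (|x i| + |y i|) / η i := by
        gcongr
        · exact (hη i).le
        · exact abs_add_le _ _
    _ = |x i| / η i + |y i| / η i := add_div _ _ _
    _ ≤ wNorm η x + wNorm η y := add_le_add (le_wNorm x i) (le_wNorm y i)

lemma wNorm_neg (x : Fin n → ℝ) : wNorm η (-x) = wNorm η x := by
  simp [wNorm]

lemma wNorm_smul (hη : ∀ i, 0 < η i) (t : ℝ) (x : Fin n → ℝ) :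
    wNorm η (t • x) = |t| * wNorm η x := by
  have key : ∀ (s : ℝ) (y : Fin n → ℝ), wNorm η (s • y) ≤ |s| * wNorm η y := by
    intro s y
    apply wNorm_le
    intro i
    have : |(s • y) i| = |s| * |y i| := by
      simp [abs_mul]
    rw [this, mul_div_assoc]
    exact mul_le_mul_of_nonneg_left (le_wNorm y i) (abs_nonneg s)
  rcases eq_or_ne t 0 with rfl | ht
  · simp [wNorm]
  · refine le_antisymm (key t x) ?_
    have h2 := key t⁻¹ (t • x)
    rw [inv_smul_smul₀ ht] at h2
    rw [abs_inv] at h2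
    have habs : 0 < |t| := abs_pos.mpr ht
    calc |t| * wNorm η x ≤ |t| * (|t|⁻¹ * wNorm η (t • x)) := by
          exact mul_le_mul_of_nonneg_left h2 habs.le
      _ = wNorm η (t • x) := by field_simp

lemma wNorm_sub_le (hη : ∀ i, 0 < η i) (x y z : Fin n → ℝ) :
    wNorm η (x - z) ≤ wNorm η (x - y) + wNorm η (y - z) := by
  have : x - z = (x - y) + (y - z) := by abel
  rw [this]; exact wNorm_add_le hη _ _



lemma clm_apply_sum (L : (Fin n → ℝ) →L[ℝ] (Fin n → ℝ)) (w : Fin n → ℝ) (i : Fin n) :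
    L w i = ∑ j, w j * L (Pi.single j 1) i := by
  have hw : w = ∑ j, w j • (Pi.single j 1 : Fin n → ℝ) := by
    have := pi_eq_sum_univ w
    convert this using 2 with j
    funext k
    simp [Pi.single_apply, eq_comm]
  conv_lhs => rw [hw]
  rw [map_sum]
  simp [Finset.sum_apply]

lemma hasDerivAt_coord (H : (Fin n → ℝ) → (Fin n → ℝ)) (hH : ContDiff ℝ 1 H)
    (b w : Fin n → ℝ) (t : ℝ) (i : Fin n) :
    HasDerivAt (fun s : ℝ => H (b + s • w) i)
      (∑ j, w j * jac H (b + t • w) i j) t := by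
  have hdiff : Differentiable ℝ H := hH.differentiable one_ne_zero
  have hline : HasDerivAt (fun s : ℝ => b + s • w) w t := by
    simpa using ((hasDerivAt_id t).smul_const w).const_add b
  have h1 : HasDerivAt (fun s : ℝ => H (b + s • w)) (fderiv ℝ H (b + t • w) w) t :=
    (hdiff _).hasFDerivAt.comp_hasDerivAt t hline
  have h2 := (hasDerivAt_pi.mp h1) i
  have h3 : fderiv ℝ H (b + t • w) w i = ∑ j, w j * jac H (b + t • w) i j :=
    clm_apply_sum _ w i
  rwa [h3] at h2

lemma hasDerivAt_line_coord (H : (Fin n → ℝ) → (Fin n → ℝ)) (hH : ContDiff ℝ 1 H)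
    (β : ℝ) (b w : Fin n → ℝ) (t : ℝ) (i : Fin n) :
    HasDerivAt (fun s : ℝ => (b + s • w) i + β * H (b + s • w) i)
      (w i + β * ∑ j, w j * jac H (b + t • w) i j) t := by
  have h1 : HasDerivAt (fun s : ℝ => (b + s • w) i) (w i) t := by
    have : (fun s : ℝ => (b + s • w) i) = fun s => b i + s * w i := rfl
    rw [this]
    simpa using ((hasDerivAt_id t).mul_const (w i)).const_add (b i)
  exact h1.add ((hasDerivAt_coord H hH b w t i).const_mul β)



lemma row_mono {H : (Fin n → ℝ) → (Fin n → ℝ)}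
    (hmono : ∀ x, logNorm η (-(jac H x)) ≤ 0) (x : Fin n → ℝ) (i : Fin n) :
    ∑ j ∈ Finset.univ.erase i, (η j / η i) * |jac H x i j| ≤ jac H x i i := by
  have h := hmono x
  have h2 : (-(jac H x)) i i + ∑ j ∈ Finset.univ.erase i, (η j / η i) * |(-(jac H x)) i j| ≤ 0 := by
    refine le_trans ?_ h
    exact le_ciSup (f := fun i => (-(jac H x)) i i + ∑ j ∈ Finset.univ.erase i,
      (η j / η i) * |(-(jac H x)) i j|) (Set.Finite.bddAbove (Set.finite_range _)) i
  simp only [Matrix.neg_apply, abs_neg] at h2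
  linarith

lemma forward_row_bound (hη : ∀ i, 0 < η i) {J : Matrix (Fin n) (Fin n) ℝ}
    {α d M : ℝ} {w : Fin n → ℝ} (i : Fin n) (hα : 0 < α) (hαd : α * d < 1)
    (hdi : J i i ≤ d)
    (hrow : ∑ j ∈ Finset.univ.erase i, (η j / η i) * |J i j| ≤ J i i)
    (hM : 0 ≤ M) (hw : ∀ j, |w j| ≤ η j * M) :
    |w i - α * ∑ j, w j * J i j| ≤ η i * M := by
  set S := ∑ j ∈ Finset.univ.erase i, w j * J i j with hS_def
  have hsum : ∑ j, w j * J i j = w i * J i i + S :=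
    (Finset.add_sum_erase Finset.univ (fun j => w j * J i j) (Finset.mem_univ i)).symm
  have h1 : (0:ℝ) ≤ 1 - α * J i i := by nlinarith
  have hSb : |S| ≤ M * ∑ j ∈ Finset.univ.erase i, η j * |J i j| := by
    calc |S| ≤ ∑ j ∈ Finset.univ.erase i, |w j * J i j| := Finset.abs_sum_le_sum_abs _ _
      _ ≤ ∑ j ∈ Finset.univ.erase i, (η j * M) * |J i j| := by
          apply Finset.sum_le_sum; intro j _
          rw [abs_mul]
          exact mul_le_mul_of_nonneg_right (hw j) (abs_nonneg _)
      _ = M * ∑ j ∈ Finset.univ.erase i, η j * |J i j| := by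
          rw [Finset.mul_sum]; apply Finset.sum_congr rfl; intro j _; ring
  have hEta : ∑ j ∈ Finset.univ.erase i, η j * |J i j| ≤ η i * J i i := by
    have he : ∑ j ∈ Finset.univ.erase i, η j * |J i j|
        = η i * ∑ j ∈ Finset.univ.erase i, (η j / η i) * |J i j| := by
      rw [Finset.mul_sum]; apply Finset.sum_congr rfl; intro j _
      have : η i * (η j / η i * |J i j|) = η j * |J i j| := by
        field_simp
        rw [mul_assoc]; exact mul_div_cancel_left₀ _ (hη i).ne'
      rw [this]
    rw [he]
    exact mul_le_mul_of_nonneg_left hrow (hη i).le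
  have hwi := hw i
  have habs : |w i - α * ∑ j, w j * J i j| ≤ (1 - α * J i i) * |w i| + α * |S| := by
    rw [hsum]
    have he2 : w i - α * (w i * J i i + S) = (1 - α * J i i) * w i + (-α) * S := by ring
    rw [he2]
    calc |(1 - α * J i i) * w i + (-α) * S| ≤ |(1 - α * J i i) * w i| + |(-α) * S| := abs_add_le _ _
      _ = (1 - α * J i i) * |w i| + α * |S| := by
          rw [abs_mul, abs_mul, abs_of_nonneg h1, abs_neg, abs_of_pos hα]
  have hSM : |S| ≤ M * (η i * J i i) := le_trans hSb (mul_le_mul_of_nonneg_left hEta hM)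
  nlinarith [mul_le_mul_of_nonneg_left hwi h1, mul_le_mul_of_nonneg_left hSM hα.le, (hη i).le]

lemma backward_row_bound (hη : ∀ i, 0 < η i) {J : Matrix (Fin n) (Fin n) ℝ}
    {α : ℝ} {w : Fin n → ℝ} (i : Fin n) (hα : 0 < α)
    (hrow : ∑ j ∈ Finset.univ.erase i, (η j / η i) * |J i j| ≤ J i i)
    (hmax : ∀ j, |w j| * η i ≤ |w i| * η j)
    {s : ℝ} (hs : s * w i = |w i|) (hs1 : |s| = 1) :
    |w i| ≤ s * (w i + α * ∑ j, w j * J i j) := by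
  have hsum : ∑ j, w j * J i j
      = w i * J i i + ∑ j ∈ Finset.univ.erase i, w j * J i j :=
    (Finset.add_sum_erase Finset.univ (fun j => w j * J i j) (Finset.mem_univ i)).symm
  have h2 : ∑ j ∈ Finset.univ.erase i, -(|w j| * |J i j|)
      ≤ ∑ j ∈ Finset.univ.erase i, s * (w j * J i j) := by
    apply Finset.sum_le_sum
    intro j _
    have h := neg_abs_le (s * (w j * J i j))
    have he : |s * (w j * J i j)| = |w j| * |J i j| := by
      rw [abs_mul, hs1, one_mul, abs_mul]
    linarith
  have h3 : ∑ j ∈ Finset.univ.erase i, |w j| * |J i j|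
      ≤ |w i| * ∑ j ∈ Finset.univ.erase i, (η j / η i) * |J i j| := by
    rw [Finset.mul_sum]
    apply Finset.sum_le_sum
    intro j _
    have hj : |w j| ≤ |w i| * (η j / η i) := by
      rw [mul_div_assoc'] at *
      exact (le_div_iff₀ (hη i)).mpr (hmax j)
    calc |w j| * |J i j| ≤ (|w i| * (η j / η i)) * |J i j| :=
          mul_le_mul_of_nonneg_right hj (abs_nonneg _)
      _ = |w i| * (η j / η i * |J i j|) := by ring
  have h4 : |w i| * ∑ j ∈ Finset.univ.erase i, (η j / η i) * |J i j| ≤ |w i| * J i i :=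
    mul_le_mul_of_nonneg_left hrow (abs_nonneg _)
  have h5 : -(|w i| * J i i) ≤ ∑ j ∈ Finset.univ.erase i, s * (w j * J i j) := by
    calc -(|w i| * J i i) ≤ -(∑ j ∈ Finset.univ.erase i, |w j| * |J i j|) := by
          have := le_trans h3 h4; linarith
      _ = ∑ j ∈ Finset.univ.erase i, -(|w j| * |J i j|) := by
          rw [Finset.sum_neg_distrib]
      _ ≤ ∑ j ∈ Finset.univ.erase i, s * (w j * J i j) := h2
  set E := ∑ j ∈ Finset.univ.erase i, w j * J i j with hE_def
  have hsE : -(|w i| * J i i) ≤ s * E := by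
    rw [hE_def, Finset.mul_sum]; exact h5
  rw [hsum]
  have expand : s * (w i + α * (w i * J i i + E)) = |w i| + α * (|w i| * J i i + s * E) := by
    rw [← hs]; ring
  rw [expand]
  nlinarith [mul_nonneg hα.le (by linarith : (0:ℝ) ≤ |w i| * J i i + s * E)]


lemma forward_nonexp (hη : ∀ i, 0 < η i)
    {F : (Fin n → ℝ) → (Fin n → ℝ)} (hF : ContDiff ℝ 1 F)
    (hmonoF : ∀ x, logNorm η (-(jac F x)) ≤ 0)
    {d α : ℝ} (hdiag : ∀ x i, jac F x i i ≤ d) (hα : 0 < α) (hαd : α * d < 1)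
    (a b : Fin n → ℝ) :
    wNorm η ((a - α • F a) - (b - α • F b)) ≤ wNorm η (a - b) := by
  set w := a - b with hw_def
  set M := wNorm η w with hM_def
  have hM0 : 0 ≤ M := wNorm_nonneg hη w
  have hwj : ∀ j, |w j| ≤ η j * M := fun j => abs_le_wNorm hη w j
  apply wNorm_le
  intro i
  rw [div_le_iff₀ (hη i), mul_comm]
  -- the scalar path function
  set h : ℝ → ℝ := fun s => (b + s • w) i + (-α) * F (b + s • w) i with hh_def
  have hder : ∀ t : ℝ, HasDerivAt h
      (w i + (-α) * ∑ j, w j * jac F (b + t • w) i j) t :=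
    fun t => hasDerivAt_line_coord F hF (-α) b w t i
  have hbound : ∀ t : ℝ, |w i + (-α) * ∑ j, w j * jac F (b + t • w) i j| ≤ η i * M := by
    intro t
    have := forward_row_bound (J := jac F (b + t • w)) hη i hα hαd
      (hdiag (b + t • w) i) (row_mono hmonoF (b + t • w) i) hM0 hwj
    have heq : w i + (-α) * ∑ j, w j * jac F (b + t • w) i j
        = w i - α * ∑ j, w j * jac F (b + t • w) i j := by ring
    rwa [heq]
  -- MVT via monotonicity, both directions
  have mono1 : Monotone (fun s => η i * M * s - h s) := by
    apply monotone_of_deriv_nonneg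
    · intro s
      exact (((hasDerivAt_id s).const_mul (η i * M)).sub (hder s)).differentiableAt
    · intro s
      have hd1 : HasDerivAt (fun s => η i * M * s - h s)
          (η i * M - (w i + (-α) * ∑ j, w j * jac F (b + s • w) i j)) s := by
        exact (((hasDerivAt_id' s).const_mul (η i * M)).sub (hder s)).congr_deriv (by ring)
      rw [hd1.deriv]
      have := hbound s
      have := abs_le.mp this
      linarith [this.2]
  have mono2 : Monotone (fun s => η i * M * s + h s) := by
    apply monotone_of_deriv_nonneg
    · intro s
      exact (((hasDerivAt_id s).const_mul (η i * M)).add (hder s)).differentiableAt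
    · intro s
      have hd1 : HasDerivAt (fun s => η i * M * s + h s)
          (η i * M + (w i + (-α) * ∑ j, w j * jac F (b + s • w) i j)) s := by
        exact (((hasDerivAt_id' s).const_mul (η i * M)).add (hder s)).congr_deriv (by ring)
      rw [hd1.deriv]
      have := abs_le.mp (hbound s)
      linarith [this.1]
  have m1 := mono1 (by norm_num : (0:ℝ) ≤ 1)
  have m2 := mono2 (by norm_num : (0:ℝ) ≤ 1)
  simp only at m1 m2
  have hb0 : b + (0:ℝ) • w = b := by simp
  have hb1 : b + (1:ℝ) • w = a := by
    rw [one_smul, hw_def]; abel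
  have hval : ((a - α • F a) - (b - α • F b)) i = h 1 - h 0 := by
    rw [hh_def]
    simp only [hb0, hb1]
    simp [Pi.sub_apply, Pi.smul_apply, smul_eq_mul]
    ring
  rw [hval]
  rw [abs_le]
  constructor
  · have : η i * M * 0 - h 0 ≤ η i * M * 1 - h 1 := m1
    linarith
  · have : η i * M * 0 + h 0 ≤ η i * M * 1 + h 1 := m2
    linarith

lemma backward_exp (hη : ∀ i, 0 < η i)
    {G : (Fin n → ℝ) → (Fin n → ℝ)} (hG : ContDiff ℝ 1 G)
    (hmonoG : ∀ x, logNorm η (-(jac G x)) ≤ 0)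
    {α : ℝ} (hα : 0 < α) (a b : Fin n → ℝ) :
    wNorm η (a - b) ≤ wNorm η ((a + α • G a) - (b + α • G b)) := by
  set w := a - b with hw_def
  obtain ⟨i, hmax⟩ := Finite.exists_max (fun j => |w j| / η j)
  have hNw : wNorm η w = |w i| / η i :=
    le_antisymm (wNorm_le hmax) (le_wNorm w i)
  have hmax' : ∀ j, |w j| * η i ≤ |w i| * η j := by
    intro j
    have := hmax j
    rw [div_le_div_iff₀ (hη j) (hη i)] at this
    linarith
  set s : ℝ := if 0 ≤ w i then 1 else -1 with hs_def
  have hs : s * w i = |w i| := by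
    rcases le_or_gt 0 (w i) with h | h
    · rw [hs_def, if_pos h, one_mul, abs_of_nonneg h]
    · rw [hs_def, if_neg (not_le.mpr h), abs_of_neg h]; ring
  have hs1 : |s| = 1 := by
    rcases le_or_gt 0 (w i) with h | h
    · rw [hs_def, if_pos h, abs_one]
    · rw [hs_def, if_neg (not_le.mpr h)]; norm_num
  set h : ℝ → ℝ := fun t => s * ((b + t • w) i + α * G (b + t • w) i) - |w i| * t with hh_def
  have hder : ∀ t : ℝ, HasDerivAt h
      (s * (w i + α * ∑ j, w j * jac G (b + t • w) i j) - |w i|) t := by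
    intro t
    refine HasDerivAt.sub ((hasDerivAt_line_coord G hG α b w t i).const_mul s) ?_
    simpa using (hasDerivAt_id t).const_mul (|w i|)
  have mono : Monotone h := by
    apply monotone_of_deriv_nonneg
    · exact fun t => (hder t).differentiableAt
    · intro t
      rw [(hder t).deriv]
      have := backward_row_bound (J := jac G (b + t • w)) hη i hα
        (row_mono hmonoG (b + t • w) i) hmax' hs hs1
      linarith
  have hmono01 := mono (by norm_num : (0:ℝ) ≤ 1)
  have hb0 : b + (0:ℝ) • w = b := by simp
  have hb1 : b + (1:ℝ) • w = a := by rw [one_smul, hw_def]; abel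
  have hb1' : b + w = a := by rw [hw_def]; abel
  have hkey : |w i| ≤ s * (((a + α • G a) - (b + α • G b)) i) := by
    have h0 : h 0 = s * (b i + α * G b i) := by
      rw [hh_def]; simp [hb0]
    have h1 : h 1 = s * (a i + α * G a i) - |w i| := by
      rw [hh_def]
      simp only [one_smul]
      rw [hb1']
      simp
    have hm := hmono01
    rw [h0, h1] at hm
    have hexp : ((a + α • G a) - (b + α • G b)) i
        = (a i + α * G a i) - (b i + α * G b i) := by
      simp [Pi.sub_apply, Pi.add_apply, Pi.smul_apply, smul_eq_mul]
    rw [hexp]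
    linarith [hm]
  have habs : |w i| ≤ |((a + α • G a) - (b + α • G b)) i| := by
    calc |w i| ≤ s * (((a + α • G a) - (b + α • G b)) i) := hkey
      _ ≤ |s * (((a + α • G a) - (b + α • G b)) i)| := le_abs_self _
      _ = |((a + α • G a) - (b + α • G b)) i| := by rw [abs_mul, hs1, one_mul]
  rw [hNw]
  calc |w i| / η i ≤ |((a + α • G a) - (b + α • G b)) i| / η i := by
        gcongr
        exact (hη i).le
    _ ≤ wNorm η ((a + α • G a) - (b + α • G b)) := le_wNorm _ i

end AuxFB

open Filter AuxFB in
/-- Averaged forward-backward splitting: weakly monotone case. -/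
theorem stmt_13 {n : ℕ} (η : Fin n → ℝ) (hη : ∀ i, 0 < η i)
    (F : (Fin n → ℝ) → (Fin n → ℝ)) (hF : ContDiff ℝ 1 F)
    (L : ℝ) (hL : ∀ x y, wNorm η (F x - F y) ≤ L * wNorm η (x - y))
    (hmonoF : ∀ x, logNorm η (-(jac F x)) ≤ 0)
    (d : ℝ) (hd : 0 < d) (hdiag : ∀ x i, jac F x i i ≤ d)
    (G : (Fin n → ℝ) → (Fin n → ℝ)) (hG : ContDiff ℝ 1 G)
    (hmonoG : ∀ x, logNorm η (-(jac G x)) ≤ 0)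
    (hzero : ∃ z : Fin n → ℝ, F z + G z = 0)
    (α : ℝ) (hα : α ∈ Set.Ioo (0 : ℝ) (1 / d))
    (x y : ℕ → (Fin n → ℝ))
    (hy : ∀ k, y k + α • G (y k) = x k - α • F (x k))
    (hx : ∀ k, x (k + 1) = (1 / 2 : ℝ) • x k + (1 / 2 : ℝ) • y k) :
    ∃ xs : Fin n → ℝ, F xs + G xs = 0 ∧ Tendsto x atTop (nhds xs) := by
  rcases Nat.eq_zero_or_pos n with hn | hn
  · subst hn
    haveI : Subsingleton (Fin 0 → ℝ) := ⟨fun a b => funext fun i => i.elim0⟩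
    refine ⟨x 0, Subsingleton.elim _ _, ?_⟩
    have hxc : x = fun _ => x 0 := funext fun k => Subsingleton.elim _ _
    rw [hxc]
    exact tendsto_const_nhds
  haveI : Nonempty (Fin n) := ⟨⟨0, hn⟩⟩
  obtain ⟨hα0, hα1⟩ := hα
  have hαd : α * d < 1 := (lt_div_iff₀ hd).mp hα1
  obtain ⟨z, hz⟩ := hzero
  have fwd : ∀ a b, wNorm η ((a - α • F a) - (b - α • F b)) ≤ wNorm η (a - b) :=
    forward_nonexp hη hF hmonoF hdiag hα0 hαd
  have bwd : ∀ a b, wNorm η (a - b) ≤ wNorm η ((a + α • G a) - (b + α • G b)) :=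
    backward_exp hη hG hmonoG hα0
  -- key1 : contraction towards any zero of F + G
  have key1 : ∀ v, F v + G v = 0 → ∀ k, wNorm η (y k - v) ≤ wNorm η (x k - v) := by
    intro v hv k
    have hGv : α • G v = -(α • F v) := by
      have hGv' : G v = -F v := by
        have h2 : F v = -G v := add_eq_zero_iff_eq_neg.mp hv
        rw [h2]; abel
      rw [hGv', smul_neg]
    calc wNorm η (y k - v) ≤ wNorm η ((y k + α • G (y k)) - (v + α • G v)) := bwd _ _
      _ = wNorm η ((x k - α • F (x k)) - (v - α • F v)) := by
          rw [hy k, hGv, ← sub_eq_add_neg]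
      _ ≤ wNorm η (x k - v) := fwd _ _
  have key1x : ∀ v, F v + G v = 0 → ∀ k,
      wNorm η (x (k+1) - v) ≤ wNorm η (x k - v) := by
    intro v hv k
    have hid : x (k+1) - v = (1/2 : ℝ) • (x k - v) + (1/2 : ℝ) • (y k - v) := by
      rw [hx k]; ext i; simp [Pi.sub_apply, Pi.add_apply, Pi.smul_apply]; ring
    rw [hid]
    calc wNorm η ((1/2 : ℝ) • (x k - v) + (1/2 : ℝ) • (y k - v))
        ≤ wNorm η ((1/2 : ℝ) • (x k - v)) + wNorm η ((1/2 : ℝ) • (y k - v)) :=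
          wNorm_add_le hη _ _
      _ = (1/2) * wNorm η (x k - v) + (1/2) * wNorm η (y k - v) := by
          rw [wNorm_smul hη, wNorm_smul hη, abs_of_pos (by norm_num : (0:ℝ) < 1/2)]
      _ ≤ wNorm η (x k - v) := by
          have := key1 v hv k
          linarith
  have key2 : ∀ k l, wNorm η (y k - y l) ≤ wNorm η (x k - x l) := by
    intro k l
    calc wNorm η (y k - y l)
        ≤ wNorm η ((y k + α • G (y k)) - (y l + α • G (y l))) := bwd _ _
      _ = wNorm η ((x k - α • F (x k)) - (x l - α • F (x l))) := by rw [hy k, hy l]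
      _ ≤ wNorm η (x k - x l) := fwd _ _
  set c : ℕ → ℝ := fun k => wNorm η (y k - x k) with hc_def
  have hxstep : ∀ k, x (k+1) - x k = (1/2 : ℝ) • (y k - x k) := by
    intro k
    rw [hx k]; ext i; simp [Pi.sub_apply, Pi.add_apply, Pi.smul_apply]; ring
  have hxstepN : ∀ k, wNorm η (x (k+1) - x k) = (1/2) * c k := by
    intro k
    rw [hxstep k, wNorm_smul hη, abs_of_pos (by norm_num : (0:ℝ) < 1/2)]
  have hcdec : ∀ k, c (k+1) ≤ c k := by
    intro k
    have hid : y (k+1) - x (k+1) = (y (k+1) - y k) + (1/2 : ℝ) • (y k - x k) := by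
      rw [hx k]; ext i; simp [Pi.sub_apply, Pi.add_apply, Pi.smul_apply]; ring
    have h1 : c (k+1) ≤ wNorm η (y (k+1) - y k) + (1/2) * c k := by
      have h := wNorm_add_le hη (y (k+1) - y k) ((1/2 : ℝ) • (y k - x k))
      rw [wNorm_smul hη, abs_of_pos (by norm_num : (0:ℝ) < 1/2)] at h
      have e : c (k+1) = wNorm η ((y (k+1) - y k) + (1/2 : ℝ) • (y k - x k)) := by
        rw [hc_def]; simp only; rw [hid]
      rw [e]
      exact h
    have h2 : wNorm η (y (k+1) - y k) ≤ (1/2) * c k := by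
      calc wNorm η (y (k+1) - y k) ≤ wNorm η (x (k+1) - x k) := key2 _ _
        _ = (1/2) * c k := hxstepN k
    linarith
  have hcant : Antitone c := antitone_nat_of_succ_le hcdec
  have hcnonneg : ∀ k, 0 ≤ c k := fun k => wNorm_nonneg hη _
  set cinf := ⨅ k, c k with hcinf_def
  have hbdd : BddBelow (Set.range c) := ⟨0, fun v ⟨k, hk⟩ => hk ▸ hcnonneg k⟩
  have hcinf_le : ∀ k, cinf ≤ c k := fun k => ciInf_le hbdd k
  have hcinf_nonneg : 0 ≤ cinf := le_ciInf hcnonneg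
  -- boundedness
  set R := wNorm η (x 0 - z) with hR_def
  have hbR : ∀ k, wNorm η (x k - z) ≤ R := by
    intro k
    induction k with
    | zero => exact le_refl R
    | succ k ih => exact le_trans (key1x z hz k) ih
  set D := c 0 + R + R with hD_def
  have hD : ∀ i m, wNorm η (y m - x i) ≤ D := by
    intro i m
    calc wNorm η (y m - x i)
        ≤ wNorm η (y m - x m) + wNorm η (x m - x i) := wNorm_sub_le hη _ _ _
      _ ≤ wNorm η (y m - x m) + (wNorm η (x m - z) + wNorm η (z - x i)) := by
          linarith [wNorm_sub_le hη (x m) z (x i)]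
      _ ≤ c 0 + (R + R) := by
          have e1 : wNorm η (z - x i) = wNorm η (x i - z) := by
            rw [show z - x i = -(x i - z) by abel, wNorm_neg]
          have h1 : c m ≤ c 0 := hcant (Nat.zero_le m)
          have h2 : wNorm η (y m - x m) = c m := rfl
          rw [e1]
          have h3 := hbR i
          have h4 := hbR m
          rw [h2]
          linarith
      _ = D := by rw [hD_def]; ring
  -- telescoping
  have htel : ∀ i m, wNorm η (x (i+m) - x i) ≤ ∑ k ∈ Finset.range m, (1/2) * c (i+k) := by
    intro i m
    induction m with
    | zero =>
        simp [wNorm]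
    | succ m ih =>
        calc wNorm η (x (i+(m+1)) - x i)
            ≤ wNorm η (x (i+(m+1)) - x (i+m)) + wNorm η (x (i+m) - x i) :=
              wNorm_sub_le hη _ _ _
          _ ≤ (1/2) * c (i+m) + ∑ k ∈ Finset.range m, (1/2) * c (i+k) := by
              have := hxstepN (i+m)
              rw [show i + (m+1) = (i+m) + 1 by ring, this]
              linarith [ih]
          _ = ∑ k ∈ Finset.range (m+1), (1/2) * c (i+k) := by
              rw [Finset.sum_range_succ]; ring
    -- asymptotic regularity: Goebel-Kirk style lower bound (constant-limit version)
  have hQ : ∀ m : ℕ, ∀ ε : ℝ, 0 < ε → ∃ I : ℕ, ∀ i, I ≤ i →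
      (1 + (m:ℝ)/2) * cinf - ε ≤ wNorm η (y (i+m) - x i) := by
    intro m
    induction m with
    | zero =>
        intro ε hε
        refine ⟨0, fun i _ => ?_⟩
        have h1 : cinf ≤ c i := hcinf_le i
        have h2 : wNorm η (y (i+0) - x i) = c i := rfl
        rw [h2]
        push_cast
        linarith
    | succ m ih =>
        intro ε hε
        obtain ⟨I₁, hI₁⟩ := ih (ε/4) (by linarith)
        set δ := ε / (2*((m:ℝ)+1)) with hδ_def
        have hδpos : 0 < δ := by positivity
        have hex : ∃ k₀, c k₀ < cinf + δ := by
          apply exists_lt_of_ciInf_lt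
          rw [← hcinf_def]
          linarith
        obtain ⟨I₂, hI₂⟩ := hex
        refine ⟨max I₁ I₂, fun i hi => ?_⟩
        have hiI₁ : I₁ ≤ i := le_trans (le_max_left _ _) hi
        have hiI₂ : I₂ ≤ i := le_trans (le_max_right _ _) hi
        have hc_small : ∀ k, i ≤ k → c k ≤ cinf + δ := fun k hk =>
          le_trans (hcant (le_trans hiI₂ hk)) hI₂.le
        have hA : (1 + (m:ℝ)/2) * cinf - ε/4 ≤ wNorm η (y (i+(m+1)) - x (i+1)) := by
          have := hI₁ (i+1) (le_trans hiI₁ (Nat.le_succ i))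
          rwa [show (i+1)+m = i+(m+1) by ring] at this
        have hid2 : (2:ℝ) • (y (i+(m+1)) - x (i+1)) =
            (y (i+(m+1)) - x i) + (y (i+(m+1)) - y i) := by
          rw [hx i]; ext j
          simp [Pi.sub_apply, Pi.add_apply, Pi.smul_apply]
          ring
        have h2A : 2 * wNorm η (y (i+(m+1)) - x (i+1)) ≤
            wNorm η (y (i+(m+1)) - x i) + wNorm η (y (i+(m+1)) - y i) := by
          have h := wNorm_add_le hη (y (i+(m+1)) - x i) (y (i+(m+1)) - y i)
          rw [← hid2, wNorm_smul hη, abs_of_pos (by norm_num : (0:ℝ) < 2)] at h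
          exact h
        have hB : wNorm η (y (i+(m+1)) - y i) ≤ ((m:ℝ)+1) * ((cinf + δ)/2) := by
          calc wNorm η (y (i+(m+1)) - y i) ≤ wNorm η (x (i+(m+1)) - x i) := key2 _ _
            _ ≤ ∑ k ∈ Finset.range (m+1), (1/2) * c (i+k) := htel i (m+1)
            _ ≤ ∑ k ∈ Finset.range (m+1), (1/2) * (cinf + δ) := by
                apply Finset.sum_le_sum
                intro k _
                have := hc_small (i+k) (Nat.le_add_right i k)
                linarith
            _ = ((m:ℝ)+1) * ((cinf + δ)/2) := by
                rw [Finset.sum_const, Finset.card_range, nsmul_eq_mul]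
                push_cast; ring
        have hδε : (((m:ℝ)+1) * δ) = ε/2 := by
          rw [hδ_def]
          field_simp
        have hE : 2*((1 + (m:ℝ)/2)*cinf - ε/4) - (((m:ℝ)+1)*((cinf+δ)/2))
            = (1 + ((m:ℝ)+1)/2)*cinf - ε/2 - (((m:ℝ)+1)*δ)/2 := by ring
        push_cast
        linarith [hA, hB, h2A, hδε, hE]
  -- cinf = 0
  have hcinf0 : cinf = 0 := by
    by_contra h
    have hpos : 0 < cinf := lt_of_le_of_ne hcinf_nonneg (Ne.symm h)
    obtain ⟨m, hm⟩ := exists_nat_gt (2*(D+1)/cinf)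
    obtain ⟨I, hI⟩ := hQ m 1 one_pos
    have h1 := hI I le_rfl
    have h2 := hD I (I+m)
    have h3 : 2*(D+1) < (m:ℝ)*cinf := by
      rw [div_lt_iff₀ hpos] at hm; linarith
    nlinarith [h1, h2, hcinf_nonneg]
  have hc0 : Tendsto c atTop (nhds 0) := by
    have := tendsto_atTop_ciInf hcant hbdd
    rwa [← hcinf_def, hcinf0] at this
  -- norm comparisons
  obtain ⟨iM, hiM⟩ := Finite.exists_max η
  obtain ⟨im, him⟩ := Finite.exists_min η
  have hCmax : 0 < η iM := hη iM
  have hηmin : 0 < η im := hη im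
  have hnorm_le : ∀ u : Fin n → ℝ, ‖u‖ ≤ η iM * wNorm η u := by
    intro u
    rw [pi_norm_le_iff_of_nonneg (mul_nonneg hCmax.le (wNorm_nonneg hη u))]
    intro i
    rw [Real.norm_eq_abs]
    calc |u i| ≤ η i * wNorm η u := abs_le_wNorm hη u i
      _ ≤ η iM * wNorm η u := mul_le_mul_of_nonneg_right (hiM i) (wNorm_nonneg hη u)
  have hwn_le : ∀ u : Fin n → ℝ, wNorm η u ≤ ‖u‖ / η im := by
    intro u
    apply wNorm_le
    intro i
    have h1 : |u i| ≤ ‖u‖ := by rw [← Real.norm_eq_abs]; exact norm_le_pi_norm u i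
    exact div_le_div₀ (norm_nonneg u) h1 hηmin (him i)
  -- bounded orbit and convergent subsequence
  have hxb : ∀ k, x k ∈ Metric.closedBall (0 : Fin n → ℝ) (‖z‖ + η iM * R) := by
    intro k
    rw [Metric.mem_closedBall, dist_zero_right]
    have e1 : x k = z + (x k - z) := by abel
    calc ‖x k‖ = ‖z + (x k - z)‖ := by rw [← e1]
      _ ≤ ‖z‖ + ‖x k - z‖ := norm_add_le _ _
      _ ≤ ‖z‖ + η iM * wNorm η (x k - z) := by linarith [hnorm_le (x k - z)]
      _ ≤ ‖z‖ + η iM * R := by nlinarith [hbR k, hCmax]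
  obtain ⟨xb, -, φ, hφ, hconv⟩ :=
    tendsto_subseq_of_bounded Metric.isBounded_closedBall hxb
  -- y ∘ φ converges to xb as well
  have hyx0 : Tendsto (fun k => ‖y k - x k‖) atTop (nhds 0) := by
    refine squeeze_zero (fun k => norm_nonneg _) (fun k => hnorm_le (y k - x k)) ?_
    simpa using hc0.const_mul (η iM)
  have hyx : Tendsto (fun k => y k - x k) atTop (nhds 0) :=
    tendsto_zero_iff_norm_tendsto_zero.mpr hyx0
  have hyconv : Tendsto (y ∘ φ) atTop (nhds xb) := by
    have h1 : Tendsto (fun j => (x ∘ φ) j + (y (φ j) - x (φ j))) atTop (nhds (xb + 0)) :=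
      hconv.add (hyx.comp hφ.tendsto_atTop)
    have h2 : (fun j => (x ∘ φ) j + (y (φ j) - x (φ j))) = y ∘ φ := by
      funext j; simp [Function.comp]
    rw [h2] at h1
    simpa using h1
  -- limit equation: xb is a zero of F + G
  have hFc : Continuous F := hF.continuous
  have hGc : Continuous G := hG.continuous
  have hlhs : Tendsto (fun j => y (φ j) + α • G (y (φ j))) atTop
      (nhds (xb + α • G xb)) :=
    hyconv.add (((hGc.tendsto xb).comp hyconv).const_smul α)
  have hrhs : Tendsto (fun j => x (φ j) - α • F (x (φ j))) atTop
      (nhds (xb - α • F xb)) :=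
    hconv.sub (((hFc.tendsto xb).comp hconv).const_smul α)
  have heqfun : (fun j => y (φ j) + α • G (y (φ j)))
      = fun j => x (φ j) - α • F (x (φ j)) := funext fun j => hy (φ j)
  have heq : xb + α • G xb = xb - α • F xb := by
    refine tendsto_nhds_unique ?_ hrhs
    rwa [heqfun] at hlhs
  have hfix : F xb + G xb = 0 := by
    have h3 : α • G xb = -(α • F xb) := by
      have := heq
      rw [sub_eq_add_neg] at this
      exact add_left_cancel this
    have h4 : α • (F xb + G xb) = 0 := by
      rw [smul_add, h3]; abel
    rcases smul_eq_zero.mp h4 with h5 | h5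
    · exact absurd h5 hα0.ne'
    · exact h5
  -- the whole sequence converges to xb
  have hrant : Antitone (fun k => wNorm η (x k - xb)) :=
    antitone_nat_of_succ_le (key1x xb hfix)
  have hrb : BddBelow (Set.range fun k => wNorm η (x k - xb)) :=
    ⟨0, fun v ⟨k, hk⟩ => hk ▸ wNorm_nonneg hη _⟩
  have hrconv := tendsto_atTop_ciInf hrant hrb
  have hsub0 : Tendsto (fun j => wNorm η (x (φ j) - xb)) atTop (nhds 0) := by
    have h1 : Tendsto (fun j => ‖(x ∘ φ) j - xb‖) atTop (nhds 0) :=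
      tendsto_iff_norm_sub_tendsto_zero.mp hconv
    refine squeeze_zero (fun j => wNorm_nonneg hη _) (fun j => hwn_le _) ?_
    have := h1.div_const (η im)
    simpa using this
  have hinf0 : (⨅ k, wNorm η (x k - xb)) = 0 :=
    tendsto_nhds_unique (hrconv.comp hφ.tendsto_atTop) hsub0
  rw [hinf0] at hrconv
  refine ⟨xb, hfix, ?_⟩
  rw [tendsto_iff_norm_sub_tendsto_zero]
  refine squeeze_zero (fun k => norm_nonneg _) (fun k => hnorm_le _) ?_
  simpa using hrconv.const_mul (η iM)
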